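/- For all integers d ≥ 0 and r ≥ 1, the complex number 8·5^d·∑_{n=d+2r}^∞ (1/(2n+1))·(1/(1−2i))^{2n+1} has absolute value at most 2·5^{1/2−2r}/(2d + 4r + 1). -/

import Mathlib

set_option maxHeartbeats 1000000 in
theorem complex_tail_bound (d r : ℕ) (hr : 1 ≤ r) :
    ‖(8 * 5 ^ d *
        ∑' n : ℕ, (1 / (2 * ((n + d + 2 * r : ℕ) : ℂ) + 1))
          * (1 / (1 - 2 * Complex.I)) ^ (2 * (n + d + 2 * r) + 1))‖
      ≤ 2 * (5 : ℝ) ^ ((1 : ℝ) / 2 - 2 * r) / (2 * d + 4 * r + 1) := by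
  set m := d + 2 * r with hm
  have hs : (0:ℝ) < Real.sqrt 5 := Real.sqrt_pos.2 (by norm_num)
  have hs2 : Real.sqrt 5 ^ 2 = 5 := Real.sq_sqrt (by norm_num)
  have hz : ‖(1 / (1 - 2 * Complex.I))‖ = 1 / Real.sqrt 5 := by
    rw [norm_div, norm_one, Complex.norm_def]
    congr 1
    simp [Complex.normSq_apply]
    norm_num
  set f : ℕ → ℂ := fun n => (1 / (2 * ((n + d + 2 * r : ℕ) : ℂ) + 1))
      * (1 / (1 - 2 * Complex.I)) ^ (2 * (n + d + 2 * r) + 1) with hf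
  set c : ℝ := (1 / (2 * m + 1)) * (1 / Real.sqrt 5) ^ (2 * m + 1) with hc
  have hterm : ∀ n : ℕ, ‖f n‖ ≤ c * (1 / 5) ^ n := by
    intro n
    have hNm : n + d + 2 * r = n + m := by omega
    have hcast : (2 * ((n + m : ℕ) : ℂ) + 1) = ((2 * (n + m) + 1 : ℕ) : ℂ) := by
      push_cast; ring
    rw [hf]
    simp only [hNm]
    simp only [hcast, norm_mul, norm_pow, hz]
    simp only [norm_div, norm_one, Complex.norm_natCast]
    have hpow : (1 / Real.sqrt 5) ^ (2 * (n + m) + 1)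
        = (1 / Real.sqrt 5) ^ (2 * m + 1) * (1 / 5 : ℝ) ^ n := by
      have h15 : (1 / 5 : ℝ) = (1 / Real.sqrt 5) ^ 2 := by
        rw [div_pow, one_pow, hs2]
      rw [h15, ← pow_mul, ← pow_add]
      ring_nf
    rw [hpow]
    have hle : (1 : ℝ) / ((2 * (n + m) + 1 : ℕ) : ℝ) ≤ 1 / (2 * (m : ℝ) + 1) := by
      apply one_div_le_one_div_of_le (by positivity)
      push_cast
      have : (0:ℝ) ≤ (n:ℝ) := Nat.cast_nonneg n
      linarith
    calc (1 : ℝ) / ((2 * (n + m) + 1 : ℕ) : ℝ)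
          * ((1 / Real.sqrt 5) ^ (2 * m + 1) * (1 / 5 : ℝ) ^ n)
        ≤ (1 / (2 * (m : ℝ) + 1))
          * ((1 / Real.sqrt 5) ^ (2 * m + 1) * (1 / 5 : ℝ) ^ n) := by
          apply mul_le_mul_of_nonneg_right hle (by positivity)
      _ = c * (1 / 5) ^ n := by rw [hc]; ring
  have hgeo : Summable (fun n : ℕ => c * (1 / 5 : ℝ) ^ n) :=
    (summable_geometric_of_lt_one (by norm_num) (by norm_num)).mul_left c
  have hsum : Summable (fun n => ‖f n‖) :=
    Summable.of_nonneg_of_le (fun n => norm_nonneg _) hterm hgeo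
  have h1 : ‖∑' n, f n‖ ≤ ∑' n, ‖f n‖ := by
    have := norm_tsum_le_tsum_norm (f := f) (by simpa using hsum)
    simpa using this
  have h2 : ∑' n, ‖f n‖ ≤ c * (5 / 4) := by
    calc ∑' n, ‖f n‖ ≤ ∑' n : ℕ, c * (1 / 5 : ℝ) ^ n :=
          Summable.tsum_le_tsum hterm hsum hgeo
      _ = c * (5 / 4) := by
          rw [tsum_mul_left, tsum_geometric_of_lt_one (by norm_num) (by norm_num)]
          norm_num
  have hmain : ‖8 * 5 ^ d * ∑' n, f n‖ ≤ 8 * 5 ^ d * (c * (5 / 4)) := by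
    have habs8 : ‖8 * 5 ^ d * ∑' n, f n‖
        = 8 * 5 ^ d * ‖∑' n, f n‖ := by
      rw [norm_mul, norm_mul, norm_pow]
      norm_num
    rw [habs8]
    have h8 : (0:ℝ) ≤ 8 * 5 ^ d := by positivity
    exact mul_le_mul_of_nonneg_left (h1.trans h2) h8
  have hrhs : (8 : ℝ) * 5 ^ d * (c * (5 / 4))
      = 2 * (5 : ℝ) ^ ((1 : ℝ) / 2 - 2 * r) / (2 * d + 4 * r + 1) := by
    have e1 : (1 / Real.sqrt 5 : ℝ) ^ (2 * m + 1) = 1 / (5 ^ m * Real.sqrt 5) := by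
      rw [div_pow, one_pow]
      congr 1
      rw [pow_succ, pow_mul, hs2]
    have e2 : (5:ℝ) ^ ((1:ℝ)/2 - 2 * (r:ℝ)) = Real.sqrt 5 / (5:ℝ) ^ (2 * r) := by
      rw [Real.rpow_sub (by norm_num : (0:ℝ) < 5)]
      congr 1
      · rw [← Real.sqrt_eq_rpow]
      · rw [← Real.rpow_natCast (5:ℝ) (2*r)]
        congr 1
        push_cast; ring
    have e4 : (5:ℝ) ^ m = 5 ^ d * 5 ^ (2 * r) := by rw [hm, pow_add]
    rw [hc, e1, e2, e4]
    have hp1 : (0:ℝ) < (5:ℝ) ^ d := by positivity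
    have hp2 : (0:ℝ) < (5:ℝ) ^ (2*r) := by positivity
    have hden : (0:ℝ) < 2 * (m:ℝ) + 1 := by positivity
    have hmcast : 2 * (m:ℝ) + 1 = 2 * (d:ℝ) + 4 * (r:ℝ) + 1 := by
      rw [hm]; push_cast; ring
    rw [← hmcast]
    field_simp
    linear_combination (-8 : ℝ) * hs2
  rw [← hrhs]
  exact hmain
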